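/- The enveloping group of the dihedral quandle R_{2n} fits in a short exact sequence 1 → ℤ × ℤ → G_{R_{2n}} → D_{2n} → 1, where the kernel is the central subgroup generated by a_0² and a_1², and D_{2n} is the dihedral group of order 4n with presentation ⟨y_0, y_1 | y_0² = y_1² = (y_0 y_1)^{2n} = 1⟩. -/

import Mathlib

open Quandles

section EnvAuxSection
open Subgroup

namespace EnvAux
variable (n : ℕ)

abbrev G := Rack.EnvelGroup (Quandle.Dihedral (2 * n))

def A (x : ZMod (2 * n)) : G n := Rack.toEnvelGroup (Quandle.Dihedral (2 * n)) x

lemma rel (x y : ZMod (2 * n)) : A n (2 * x - y) = A n x * A n y * (A n x)⁻¹ :=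
  (Rack.toEnvelGroup (Quandle.Dihedral (2 * n))).map_act

lemma mem_gen (g : G n) : g ∈ Subgroup.closure (Set.range (A n)) := by
  induction g using Quotient.inductionOn with
  | h g =>
    induction g with
    | unit => exact (Subgroup.closure _).one_mem
    | incl x => exact Subgroup.subset_closure ⟨x, rfl⟩
    | mul x y hx hy => exact (Subgroup.closure _).mul_mem hx hy
    | inv x hx => exact (Subgroup.closure _).inv_mem hx

lemma rel' (x y : ZMod (2 * n)) : A n x * A n y = A n (2 * x - y) * A n x := by
  rw [rel]; group

lemma sq_comm (x y : ZMod (2 * n)) : A n x ^ 2 * A n y = A n y * A n x ^ 2 := by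
  have h1 : A n x * A n y = A n (2 * x - y) * A n x := rel' n x y
  have h2 : A n x * A n (2 * x - y) = A n y * A n x := by
    have := rel' n x (2 * x - y)
    rwa [show 2 * x - (2 * x - y) = y by ring] at this
  calc A n x ^ 2 * A n y = A n x * (A n x * A n y) := by rw [pow_two]; group
    _ = A n x * A n (2 * x - y) * A n x := by rw [h1]; group
    _ = A n y * A n x * A n x := by rw [h2]
    _ = A n y * A n x ^ 2 := by rw [pow_two]; group

lemma sq_central (x : ZMod (2 * n)) : A n x ^ 2 ∈ Subgroup.center (G n) := by
  rw [Subgroup.mem_center_iff]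
  intro g
  have hg := mem_gen n g
  induction hg using Subgroup.closure_induction with
  | mem y hy => obtain ⟨y, rfl⟩ := hy; exact (sq_comm n x y).symm
  | one => simp
  | mul a b _ _ ha hb => rw [mul_assoc, hb, ← mul_assoc, ha, mul_assoc]
  | inv a _ ha => exact Commute.inv_left ha

def K : Subgroup (G n) := Subgroup.closure {A n 0 ^ 2, A n 1 ^ 2}

lemma K_le_center : K n ≤ Subgroup.center (G n) := by
  rw [K, Subgroup.closure_le]
  intro g hg
  simp only [Set.mem_insert_iff, Set.mem_singleton_iff] at hg
  rcases hg with rfl | rfl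
  exacts [sq_central n 0, sq_central n 1]

instance K_normal : (K n).Normal := by
  constructor
  intro x hx g
  have h := Subgroup.mem_center_iff.mp (K_le_center n hx) g
  have : g * x * g⁻¹ = x := by rw [h, mul_inv_cancel_right]
  rwa [this]

abbrev Gbar := G n ⧸ K n

def q : G n →* Gbar n := QuotientGroup.mk' (K n)

def XX : Gbar n := q n (A n 0)
def YY : Gbar n := q n (A n 1)
def ZZ : Gbar n := XX n * YY n

lemma sq_mem_K_zero : A n 0 ^ 2 ∈ K n :=
  Subgroup.subset_closure (by simp)

lemma sq_mem_K_one : A n 1 ^ 2 ∈ K n :=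
  Subgroup.subset_closure (by simp)

lemma XX_sq : XX n * XX n = 1 := by
  have : q n (A n 0 ^ 2) = 1 := by
    rw [← MonoidHom.mem_ker, q, QuotientGroup.ker_mk']
    exact sq_mem_K_zero n
  rwa [pow_two, map_mul] at this

lemma YY_sq : YY n * YY n = 1 := by
  have : q n (A n 1 ^ 2) = 1 := by
    rw [← MonoidHom.mem_ker, q, QuotientGroup.ker_mk']
    exact sq_mem_K_one n
  rwa [pow_two, map_mul] at this

lemma XX_inv : (XX n)⁻¹ = XX n := by
  rw [inv_eq_iff_mul_eq_one, XX_sq]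

lemma YY_inv : (YY n)⁻¹ = YY n := by
  rw [inv_eq_iff_mul_eq_one, YY_sq]

lemma YX : YY n * XX n = (ZZ n)⁻¹ := by
  rw [ZZ, mul_inv_rev, XX_inv, YY_inv]

lemma XZ : XX n * ZZ n = YY n := by
  rw [ZZ, ← mul_assoc, XX_sq, one_mul]

lemma Zinv_X : (ZZ n)⁻¹ * XX n = XX n * ZZ n := by
  rw [← YX, mul_assoc, XX_sq, mul_one, XZ]

lemma conjX_zpow (t : ℤ) : XX n * ZZ n ^ t * XX n = ZZ n ^ (-t) := by
  have h0 : XX n * ZZ n * (XX n)⁻¹ = (ZZ n)⁻¹ := by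
    rw [XX_inv, XZ, YX]
  have h := map_zpow (MulAut.conj (XX n)) (ZZ n) t
  simp only [MulAut.conj_apply] at h
  rw [h0, XX_inv] at h
  rw [h, inv_zpow, ← zpow_neg]


lemma conjY_aux : YY n * ZZ n * (YY n)⁻¹ = (ZZ n)⁻¹ := by
  calc YY n * ZZ n * (YY n)⁻¹ = YY n * XX n * (YY n * YY n) := by rw [YY_inv, ZZ]; group
  _ = (ZZ n)⁻¹ := by rw [YY_sq, mul_one, YX]

lemma conjY_zpow (t : ℤ) : YY n * ZZ n ^ t * YY n = ZZ n ^ (-t) := by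
  have h := map_zpow (MulAut.conj (YY n)) (ZZ n) t
  simp only [MulAut.conj_apply] at h
  rw [conjY_aux, YY_inv] at h
  rw [h, inv_zpow, ← zpow_neg]

lemma zpow_X (t : ℤ) : ZZ n ^ t * XX n = XX n * ZZ n ^ (-t) := by
  have h := conjX_zpow n (-t)
  rw [neg_neg] at h
  rw [← h, mul_assoc, mul_assoc, XX_sq, mul_one]

lemma zpow_Y (t : ℤ) : ZZ n ^ t * YY n = YY n * ZZ n ^ (-t) := by
  have h := conjY_zpow n (-t)
  rw [neg_neg] at h
  rw [← h, mul_assoc, mul_assoc, YY_sq, mul_one]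

lemma qA0 : q n (A n 0) = XX n := rfl
lemma qA1 : q n (A n 1) = YY n := rfl

lemma formula_nat : ∀ k : ℕ, q n (A n ((k : ZMod (2 * n)))) = XX n * ZZ n ^ (k : ℤ) := by
  intro k
  induction k using Nat.twoStepInduction with
  | zero => rw [Nat.cast_zero, qA0]; simp
  | one => rw [Nat.cast_one, qA1, ← XZ]; simp
  | more k ih _ =>
    have hc : ((k + 2 : ℕ) : ZMod (2 * n)) = 2 * 1 - (2 * 0 - (k : ZMod (2 * n))) := by
      push_cast; ring
    rw [hc, rel, rel, map_mul, map_mul, map_inv, map_mul, map_mul, map_inv, qA0, qA1, ih]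
    rw [XX_inv, YY_inv]
    calc YY n * (XX n * (XX n * ZZ n ^ (k : ℤ)) * XX n) * YY n
        = YY n * ((XX n * XX n) * (ZZ n ^ (k : ℤ) * XX n)) * YY n := by group
      _ = YY n * (XX n * ZZ n ^ (-(k:ℤ))) * YY n := by rw [XX_sq, one_mul, zpow_X]
      _ = (YY n * XX n) * (ZZ n ^ (-(k:ℤ)) * YY n) := by group
      _ = (ZZ n)⁻¹ * (YY n * ZZ n ^ (k:ℤ)) := by rw [YX, zpow_Y, neg_neg]
      _ = ((ZZ n)⁻¹ * XX n) * ZZ n ^ (1 + (k:ℤ)) := by rw [← XZ]; group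
      _ = XX n * ZZ n ^ ((k + 2 : ℕ) : ℤ) := by rw [Zinv_X]; push_cast; group

lemma Z_order : ZZ n ^ ((2 * n : ℕ) : ℤ) = 1 := by
  have h1 := formula_nat n (2 * n)
  have h2 := formula_nat n 0
  rw [ZMod.natCast_self] at h1
  rw [Nat.cast_zero] at h2
  have := h2.symm.trans h1
  have h3 := mul_left_cancel this
  rw [← h3]
  simp

lemma formula_int (t : ℤ) : q n (A n ((t : ZMod (2 * n)))) = XX n * ZZ n ^ t := by
  rcases t.eq_nat_or_neg with ⟨s, rfl | rfl⟩
  · rw [show (((s : ℕ) : ℤ) : ZMod (2 * n)) = ((s : ℕ) : ZMod (2 * n)) by push_cast; ring]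
    exact formula_nat n s
  · rw [show ((-(s : ℤ) : ℤ) : ZMod (2 * n)) = 2 * 0 - ((s : ℕ) : ZMod (2 * n)) by push_cast; ring]
    rw [rel, map_mul, map_mul, map_inv, qA0, formula_nat, XX_inv]
    calc XX n * (XX n * ZZ n ^ (s : ℤ)) * XX n
        = (XX n * XX n) * (ZZ n ^ (s : ℤ) * XX n) := by group
      _ = XX n * ZZ n ^ (-(s:ℤ)) := by rw [XX_sq, one_mul, zpow_X]


def zeta : ZMod (2 * n) →+ Additive (Gbar n) :=
  ZMod.lift (2 * n) ⟨AddMonoidHom.mk' (fun t => Additive.ofMul (ZZ n ^ t))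
    (fun a b => by
      show Additive.ofMul (ZZ n ^ (a + b)) = Additive.ofMul (ZZ n ^ a) + Additive.ofMul (ZZ n ^ b)
      rw [zpow_add]; rfl), by
      show Additive.ofMul (ZZ n ^ ((2 * n : ℕ) : ℤ)) = 0
      rw [Z_order]; rfl⟩

def Zc (c : ZMod (2 * n)) : Gbar n := Additive.toMul (zeta n c)

lemma Zc_intCast (t : ℤ) : Zc n ((t : ZMod (2 * n))) = ZZ n ^ t := by
  show Additive.toMul (zeta n _) = _
  rw [zeta, ZMod.lift_coe]
  rfl

lemma Zc_add (c d : ZMod (2 * n)) : Zc n (c + d) = Zc n c * Zc n d := by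
  show Additive.toMul (zeta n _) = _
  rw [map_add]; rfl

lemma Zc_X (c : ZMod (2 * n)) : Zc n c * XX n = XX n * Zc n (-c) := by
  obtain ⟨t, rfl⟩ := ZMod.intCast_surjective c
  rw [Zc_intCast, show (-((t : ℤ) : ZMod (2*n))) = ((-t : ℤ) : ZMod (2*n)) by push_cast; ring,
    Zc_intCast, zpow_X]

lemma qA_eq (c : ZMod (2 * n)) : q n (A n c) = XX n * Zc n c := by
  obtain ⟨t, rfl⟩ := ZMod.intCast_surjective c
  rw [Zc_intCast, formula_int]

def chi : DihedralGroup (2 * n) → Gbar n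
  | .r i => Zc n i
  | .sr i => XX n * Zc n i

lemma chi_mul (d e : DihedralGroup (2 * n)) : chi n (d * e) = chi n d * chi n e := by
  rcases d with i | i <;> rcases e with j | j
  · rw [DihedralGroup.r_mul_r]
    show Zc n (i + j) = Zc n i * Zc n j
    exact Zc_add n i j
  · rw [DihedralGroup.r_mul_sr]
    show XX n * Zc n (j - i) = Zc n i * (XX n * Zc n j)
    rw [← mul_assoc, Zc_X, mul_assoc, ← Zc_add, neg_add_eq_sub]
  · rw [DihedralGroup.sr_mul_r]
    show XX n * Zc n (i + j) = XX n * Zc n i * Zc n j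
    rw [mul_assoc, ← Zc_add]
  · rw [DihedralGroup.sr_mul_sr]
    show Zc n (j - i) = (XX n * Zc n i) * (XX n * Zc n j)
    rw [mul_assoc, ← mul_assoc (Zc n i), Zc_X, ← mul_assoc, ← mul_assoc, XX_sq, one_mul,
      ← Zc_add, neg_add_eq_sub]

def chiHom : DihedralGroup (2 * n) →* Gbar n := MonoidHom.mk' (chi n) (chi_mul n)

lemma sr_aux (x y : ZMod (2 * n)) : DihedralGroup.sr (2 * x - y)
    = DihedralGroup.sr x * DihedralGroup.sr y * (DihedralGroup.sr x)⁻¹ := by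
  rw [show (DihedralGroup.sr x)⁻¹ = DihedralGroup.sr x from rfl, DihedralGroup.sr_mul_sr,
    DihedralGroup.r_mul_sr]
  congr 1
  ring

def srMap : Quandle.Dihedral (2 * n) →◃ Quandle.Conj (DihedralGroup (2 * n)) where
  toFun x := DihedralGroup.sr x
  map_act' := @fun x y => sr_aux n x y

def phi : G n →* DihedralGroup (2 * n) := Rack.toEnvelGroup.map (srMap n)

lemma phi_A (m : ZMod (2 * n)) : phi n (A n m) = DihedralGroup.sr m := rfl

lemma phi_surj : Function.Surjective (phi n) := by
  rintro (i | i)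
  · exact ⟨A n 0 * A n i, by rw [map_mul, phi_A, phi_A, DihedralGroup.sr_mul_sr, sub_zero]⟩
  · exact ⟨A n i, phi_A n i⟩

lemma compat (g : G n) : chiHom n (phi n g) = q n g := by
  have hg := mem_gen n g
  induction hg using Subgroup.closure_induction with
  | mem y hy =>
    obtain ⟨m, rfl⟩ := hy
    rw [phi_A, qA_eq]
    rfl
  | one => simp
  | mul a b _ _ ha hb => rw [map_mul, map_mul, map_mul, ha, hb]
  | inv a _ ha => rw [map_inv, map_inv, map_inv, ha]

lemma ker_phi : (phi n).ker = K n := by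
  apply le_antisymm
  · intro g hg
    have h2 : q n g = 1 := by
      rw [← compat n g, MonoidHom.mem_ker.mp hg, map_one]
    have h3 : g ∈ (QuotientGroup.mk' (K n)).ker := MonoidHom.mem_ker.mpr h2
    rwa [QuotientGroup.ker_mk'] at h3
  · rw [K, Subgroup.closure_le]
    intro g hg
    simp only [Set.mem_insert_iff, Set.mem_singleton_iff] at hg
    rcases hg with rfl | rfl <;>
    · refine MonoidHom.mem_ker.mpr ?_
      rw [map_pow, phi_A, pow_two, DihedralGroup.sr_mul_sr, sub_self, DihedralGroup.one_def]


lemma par_aux (x y : ZMod (2 * n)) :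
    (if ZMod.castHom (⟨n, rfl⟩ : (2:ℕ) ∣ 2 * n) (ZMod 2) (2 * x - y) = 0
      then ((1, 0) : ℤ × ℤ) else (0, 1))
    = (if ZMod.castHom (⟨n, rfl⟩ : (2:ℕ) ∣ 2 * n) (ZMod 2) y = 0
      then ((1, 0) : ℤ × ℤ) else (0, 1)) := by
  have h : (ZMod.castHom (⟨n, rfl⟩ : (2:ℕ) ∣ 2 * n) (ZMod 2)) (2 * x - y)
      = - (ZMod.castHom (⟨n, rfl⟩ : (2:ℕ) ∣ 2 * n) (ZMod 2)) y := by
    rw [map_sub, map_mul, map_ofNat, show (2 : ZMod 2) = 0 from rfl, zero_mul, zero_sub]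
  rw [h]
  simp only [neg_eq_zero]

def par : Quandle.Dihedral (2 * n) →◃ Quandle.Conj (Multiplicative (ℤ × ℤ)) where
  toFun x := Multiplicative.ofAdd
    (if ZMod.castHom (⟨n, rfl⟩ : (2:ℕ) ∣ 2 * n) (ZMod 2) x = 0 then ((1, 0) : ℤ × ℤ) else (0, 1))
  map_act' := @fun x y => by
    show Multiplicative.ofAdd (_ : ℤ × ℤ) = Multiplicative.ofAdd (_ : ℤ × ℤ) *
      Multiplicative.ofAdd (_ : ℤ × ℤ) * (Multiplicative.ofAdd (_ : ℤ × ℤ))⁻¹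
    rw [mul_comm (Multiplicative.ofAdd (_ : ℤ × ℤ)), mul_inv_cancel_right]
    exact congrArg _ (par_aux n x y)

def theta : G n →* Multiplicative (ℤ × ℤ) := Rack.toEnvelGroup.map (par n)

lemma theta_A (m : ZMod (2 * n)) : theta n (A n m) = Multiplicative.ofAdd
    (if ZMod.castHom (⟨n, rfl⟩ : (2:ℕ) ∣ 2 * n) (ZMod 2) m = 0
      then ((1, 0) : ℤ × ℤ) else (0, 1)) := rfl

lemma theta_A0 : theta n (A n 0) = Multiplicative.ofAdd ((1, 0) : ℤ × ℤ) := by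
  rw [theta_A, if_pos (map_zero _)]

lemma theta_A1 : theta n (A n 1) = Multiplicative.ofAdd ((0, 1) : ℤ × ℤ) := by
  rw [theta_A, if_neg]
  rw [map_one]
  exact one_ne_zero

def fK : Multiplicative (ℤ × ℤ) →* G n :=
  MonoidHom.mk' (fun p => (A n 0 ^ 2) ^ (Multiplicative.toAdd p).1
      * (A n 1 ^ 2) ^ (Multiplicative.toAdd p).2) (by
    intro a b
    have hc : Commute (A n 0 ^ 2) (A n 1 ^ 2) :=
      Subgroup.mem_center_iff.mp (sq_central n 1) (A n 0 ^ 2)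
    show (A n 0 ^ 2) ^ ((Multiplicative.toAdd a).1 + (Multiplicative.toAdd b).1)
        * (A n 1 ^ 2) ^ ((Multiplicative.toAdd a).2 + (Multiplicative.toAdd b).2)
        = ((A n 0 ^ 2) ^ (Multiplicative.toAdd a).1 * (A n 1 ^ 2) ^ (Multiplicative.toAdd a).2)
          * ((A n 0 ^ 2) ^ (Multiplicative.toAdd b).1 * (A n 1 ^ 2) ^ (Multiplicative.toAdd b).2)
    rw [zpow_add, zpow_add]
    exact (hc.zpow_zpow _ _).mul_mul_mul_comm _ _)

lemma fK_apply (p : ℤ × ℤ) : fK n (Multiplicative.ofAdd p)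
    = (A n 0 ^ 2) ^ p.1 * (A n 1 ^ 2) ^ p.2 := rfl

lemma theta_fK (p : ℤ × ℤ) : theta n (fK n (Multiplicative.ofAdd p))
    = Multiplicative.ofAdd ((2 * p.1, 2 * p.2) : ℤ × ℤ) := by
  rw [fK_apply, map_mul, map_zpow, map_zpow, map_pow, map_pow, theta_A0, theta_A1]
  rw [← ofAdd_nsmul, ← ofAdd_nsmul, ← ofAdd_zsmul, ← ofAdd_zsmul, ← ofAdd_add]
  congr 1
  simp [Prod.ext_iff]
  constructor <;> ring

lemma fK_inj : Function.Injective (fK n) := by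
  intro a b h
  have h2 := congrArg (theta n) h
  obtain ⟨p, rfl⟩ := Multiplicative.ofAdd.surjective a
  obtain ⟨r, rfl⟩ := Multiplicative.ofAdd.surjective b
  rw [theta_fK, theta_fK] at h2
  have h3 : ((2 * p.1, 2 * p.2) : ℤ × ℤ) = (2 * r.1, 2 * r.2) :=
    Multiplicative.ofAdd.injective h2
  rw [Prod.mk.injEq] at h3
  refine congrArg _ (Prod.ext ?_ ?_) <;> omega

lemma fK_range : (fK n).range = K n := by
  apply le_antisymm
  · rintro _ ⟨p, rfl⟩
    obtain ⟨p, rfl⟩ := Multiplicative.ofAdd.surjective p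
    rw [fK_apply]
    exact mul_mem (zpow_mem (Subgroup.subset_closure (by simp)) _)
      (zpow_mem (Subgroup.subset_closure (by simp)) _)
  · rw [K, Subgroup.closure_le]
    intro g hg
    simp only [Set.mem_insert_iff, Set.mem_singleton_iff] at hg
    rcases hg with rfl | rfl
    · exact ⟨Multiplicative.ofAdd (1, 0), by rw [fK_apply]; simp⟩
    · exact ⟨Multiplicative.ofAdd (0, 1), by rw [fK_apply]; simp⟩

noncomputable def isoK : (K n) ≃* Multiplicative (ℤ × ℤ) :=
  ((MulEquiv.subgroupCongr (fK_range n).symm).trans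
    (MulEquiv.ofBijective (fK n).rangeRestrict
      ⟨fun a b h => fK_inj n (congrArg Subtype.val h),
        (fK n).rangeRestrict_surjective⟩).symm)

end EnvAux

end EnvAuxSection

/-- The image `a_k` of the element `x_k` of the dihedral quandle `R_{2n}`
in its enveloping group. -/
def dihedralGen (n : ℕ) (k : ℕ) : Rack.EnvelGroup (Quandle.Dihedral (2 * n)) :=
  Rack.toEnvelGroup (Quandle.Dihedral (2 * n)) ((k : ZMod (2 * n)) : Quandle.Dihedral (2 * n))

/-- The enveloping group `G` of the dihedral quandle `R_{2n}` fits in a short exact sequence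
`1 → ℤ × ℤ → G → D_{2n} → 1`: there is a surjective homomorphism onto the dihedral group of
order `4n` whose kernel is the central subgroup generated by `a_0²` and `a_1²`, and this
kernel is isomorphic to `ℤ × ℤ`. -/
theorem envelGroup_dihedral_ses (n : ℕ) (hn : 0 < n) :
    Subgroup.closure {dihedralGen n 0 ^ 2, dihedralGen n 1 ^ 2}
        ≤ Subgroup.center (Rack.EnvelGroup (Quandle.Dihedral (2 * n))) ∧
    Nonempty ((Subgroup.closure {dihedralGen n 0 ^ 2, dihedralGen n 1 ^ 2})
        ≃* Multiplicative (ℤ × ℤ)) ∧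
    ∃ φ : Rack.EnvelGroup (Quandle.Dihedral (2 * n)) →* DihedralGroup (2 * n),
      Function.Surjective φ ∧
      φ.ker = Subgroup.closure {dihedralGen n 0 ^ 2, dihedralGen n 1 ^ 2} := by
  have e0 : dihedralGen n 0 = EnvAux.A n 0 := by
    show EnvAux.A n ((0 : ℕ) : ZMod (2 * n)) = EnvAux.A n 0
    norm_num
  have e1 : dihedralGen n 1 = EnvAux.A n 1 := by
    show EnvAux.A n ((1 : ℕ) : ZMod (2 * n)) = EnvAux.A n 1
    norm_num
  have hset : ({dihedralGen n 0 ^ 2, dihedralGen n 1 ^ 2}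
      : Set (Rack.EnvelGroup (Quandle.Dihedral (2 * n))))
      = {EnvAux.A n 0 ^ 2, EnvAux.A n 1 ^ 2} := by
    rw [e0, e1]
  rw [hset]
  exact ⟨EnvAux.K_le_center n, ⟨EnvAux.isoK n⟩, EnvAux.phi n, EnvAux.phi_surj n,
    EnvAux.ker_phi n⟩
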